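/- For the d-dimensional irreducible representation ρ of 𝔰𝔩₂(ℂ) (d ≥ 2), the matrix (d²−1)·Tr(ρ(X)ρ(Y)ρ(Z))·I_d equals c_d · St₃(ρ(X),ρ(Y),ρ(Z)) for all X, Y, Z ∈ 𝔰𝔩₂(ℂ), where St₃(A,B,C) = ABC + BCA + CAB − BAC − ACB − CBA is the standard polynomial of degree 3 and c_d = Σ_{i=1}^{⌊(d+1)/2⌋} (d+1−2i)². -/

import Mathlib

/-- The `d`-dimensional irreducible representation of `𝔰𝔩₂(ℂ)`, written in the monomial
basis of binary forms of degree `d−1` (0-indexed matrix units). -/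
noncomputable def sl2Rep (d : ℕ) (M : Matrix (Fin 2) (Fin 2) ℂ) :
    Matrix (Fin d) (Fin d) ℂ :=
  Matrix.of fun i j =>
    M 0 1 * (if (j : ℕ) = (i : ℕ) + 1 then ((i : ℕ) + 1 : ℂ) else 0) +
    M 1 0 * (if (i : ℕ) = (j : ℕ) + 1 then ((d : ℂ) - 1 - (j : ℕ)) else 0) +
    M 0 0 * (if i = j then ((d : ℂ) - 1 - 2 * (i : ℕ)) else 0)

/-- The standard polynomial of degree 3. -/
noncomputable def St3 {n : ℕ} (A B C : Matrix (Fin n) (Fin n) ℂ) : Matrix (Fin n) (Fin n) ℂ :=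
  A * B * C + B * C * A + C * A * B - B * A * C - A * C * B - C * B * A

namespace Stmt11Aux
open Matrix

/-! ### Scalar sums -/

lemma sum_id (n : ℕ) : ∑ i ∈ Finset.range n, (i:ℂ) = n*(n-1)/2 := by
  induction n with
  | zero => simp
  | succ n ih => rw [Finset.sum_range_succ, ih]; push_cast; ring

lemma sum_sq (n : ℕ) : ∑ i ∈ Finset.range n, (i:ℂ)^2 = n*(n-1)*(2*n-1)/6 := by
  induction n with
  | zero => simp
  | succ n ih => rw [Finset.sum_range_succ, ih]; push_cast; ring

lemma sum_cube (n : ℕ) : ∑ i ∈ Finset.range n, (i:ℂ)^3 = (n*(n-1))^2/4 := by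
  induction n with
  | zero => simp
  | succ n ih => rw [Finset.sum_range_succ, ih]; push_cast; ring

lemma sum_poly (n : ℕ) (a b c e : ℂ) :
    ∑ i ∈ Finset.range n, (a + b*(i:ℂ) + c*(i:ℂ)^2 + e*(i:ℂ)^3) =
      n*a + b*(n*(n-1)/2) + c*(n*(n-1)*(2*n-1)/6) + e*((n*(n-1))^2/4) := by
  simp only [Finset.sum_add_distrib, ← Finset.mul_sum, sum_id, sum_sq, sum_cube,
    Finset.sum_const, Finset.card_range, nsmul_eq_mul]

lemma L1 (d : ℕ) :
    ∑ i ∈ Finset.range ((d + 1) / 2), ((d : ℂ) - 1 - 2 * (i : ℂ)) ^ 2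
      = d*((d:ℂ)^2-1)/6 := by
  have key : ∀ m : ℕ, ∀ dd : ℂ, ∑ i ∈ Finset.range m, (dd - 1 - 2 * (i : ℂ)) ^ 2
      = m*(dd-1)^2 - 4*(dd-1)*(m*(m-1)/2) + 4*(m*(m-1)*(2*m-1)/6) := by
    intro m dd
    have h : ∑ i ∈ Finset.range m, (dd - 1 - 2 * (i : ℂ)) ^ 2
        = ∑ i ∈ Finset.range m,
            ((dd-1)^2 + (-(4*(dd-1)))*(i:ℂ) + 4*(i:ℂ)^2 + 0*(i:ℂ)^3) :=
      Finset.sum_congr rfl (fun i _ => by ring)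
    rw [h, sum_poly]
    ring
  rcases Nat.even_or_odd d with ⟨m, hm⟩ | ⟨m, hm⟩
  · have h2 : (d+1)/2 = m := by omega
    rw [h2, key, hm]; push_cast; ring
  · have h2 : (d+1)/2 = m+1 := by omega
    rw [h2, key, hm]; push_cast; ring

/-! ### The basis matrices -/

variable (d : ℕ)

noncomputable def A : Matrix (Fin d) (Fin d) ℂ :=
  Matrix.of fun i j => if (j:ℕ) = (i:ℕ)+1 then ((i:ℕ)+1 : ℂ) else 0
noncomputable def B : Matrix (Fin d) (Fin d) ℂ :=
  Matrix.of fun i j => if (i:ℕ) = (j:ℕ)+1 then ((d:ℂ)-1-(j:ℕ)) else 0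
noncomputable def D : Matrix (Fin d) (Fin d) ℂ :=
  Matrix.diagonal fun i => ((d:ℂ)-1-2*(i:ℕ))

lemma decomp (M : Matrix (Fin 2) (Fin 2) ℂ) :
    sl2Rep d M = M 0 1 • A d + M 1 0 • B d + M 0 0 • D d := by
  ext i j
  simp [sl2Rep, A, B, D, Matrix.diagonal]

variable {d}

/-! ### Shift grading -/

def Shifts (M : Matrix (Fin d) (Fin d) ℂ) (s : ℤ) : Prop :=
  ∀ i j : Fin d, (j:ℤ) ≠ (i:ℤ) + s → M i j = 0

lemma shifts_A : Shifts (A d) 1 := by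
  intro i j h
  simp only [A, Matrix.of_apply]
  rw [if_neg]
  omega

lemma shifts_B : Shifts (B d) (-1) := by
  intro i j h
  simp only [B, Matrix.of_apply]
  rw [if_neg]
  omega

lemma shifts_D : Shifts (D d) 0 := by
  intro i j h
  exact Matrix.diagonal_apply_ne _ (by intro hh; apply h; rw [hh]; ring)

lemma shifts_mul {M N : Matrix (Fin d) (Fin d) ℂ} {s t : ℤ}
    (hM : Shifts M s) (hN : Shifts N t) : Shifts (M * N) (s + t) := by
  intro i j h
  rw [Matrix.mul_apply]
  refine Finset.sum_eq_zero fun k _ => ?_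
  by_cases hk : (k:ℤ) = (i:ℤ) + s
  · rw [hN k j (by omega), mul_zero]
  · rw [hM i k hk, zero_mul]

lemma trace_shifts {M : Matrix (Fin d) (Fin d) ℂ} {s : ℤ}
    (hM : Shifts M s) (hs : s ≠ 0) : M.trace = 0 := by
  rw [Matrix.trace]
  exact Finset.sum_eq_zero fun i _ => hM i i (by omega)

/-! ### Products -/

lemma fin_sum_eq (f : Fin d → ℂ) (n : ℕ)
    (h : ∀ k : Fin d, (k:ℕ) ≠ n → f k = 0) :
    ∑ k, f k = if hn : n < d then f ⟨n, hn⟩ else 0 := by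
  split_ifs with hn
  · refine Finset.sum_eq_single _ (fun k _ hk => h k ?_) (by simp)
    simpa [Fin.ext_iff] using hk
  · exact Finset.sum_eq_zero fun k _ => h k (by omega)

lemma mul_AB (hd : 1 ≤ d) :
    A d * B d = Matrix.diagonal fun i : Fin d => ((i:ℕ)+1) * ((d:ℂ)-1-(i:ℕ)) := by
  ext i j
  rw [Matrix.mul_apply]
  rw [fin_sum_eq (n := (i:ℕ)+1) _ (fun k hk => by
    simp only [A, Matrix.of_apply, if_neg hk, zero_mul])]
  split_ifs with hn
  · by_cases hij : i = j
    · subst hij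
      simp [A, B, Matrix.diagonal_apply]
    · have h2 : ¬ ((i:ℕ) + 1 = (j:ℕ) + 1) := by
        simp only [Fin.ext_iff] at hij; omega
      simp [A, B, Matrix.diagonal_apply, hij, h2, Fin.val_inj]
  · have hi : (i:ℕ) = d - 1 := by omega
    by_cases hij : i = j
    · subst hij
      have hc : ((i:ℕ):ℂ) = (d:ℂ) - 1 := by
        rw [hi]; push_cast [hd]; ring
      simp [Matrix.diagonal_apply, hc]
    · simp [Matrix.diagonal_apply, hij]

lemma mul_BA :
    B d * A d = Matrix.diagonal fun i : Fin d => (i:ℕ) * ((d:ℂ)-(i:ℕ)) := by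
  ext i j
  rw [Matrix.mul_apply]
  by_cases hi : (i:ℕ) = 0
  · rw [Finset.sum_eq_zero (fun k _ => by
      simp only [B, Matrix.of_apply]; rw [if_neg (by omega), zero_mul])]
    simp only [Matrix.diagonal_apply]
    by_cases hij : i = j
    · subst hij; rw [if_pos rfl, hi]; simp
    · rw [if_neg hij]
  · obtain ⟨m, hm⟩ : ∃ m, (i:ℕ) = m + 1 := ⟨(i:ℕ)-1, by omega⟩
    rw [fin_sum_eq (n := m) _ (fun k hk => by
      simp only [B, Matrix.of_apply]; rw [if_neg (by omega), zero_mul])]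
    rw [dif_pos (by omega)]
    simp only [A, B, Matrix.of_apply, Matrix.diagonal_apply, Fin.val_mk]
    rw [if_pos hm]
    by_cases hij : i = j
    · subst hij
      rw [if_pos hm, if_pos rfl]
      have h1 : ((i:ℕ):ℂ) = (m:ℂ) + 1 := by rw [hm]; push_cast; ring
      rw [h1]; push_cast; ring
    · have h3 : ¬ ((j:ℕ) = m + 1) := by
        simp only [Fin.ext_iff] at hij; omega
      rw [if_neg h3, if_neg hij, mul_zero]

/-! ### Rewriting relations -/

lemma rel_BA (hd : 1 ≤ d) : B d * A d = A d * B d - D d := by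
  rw [mul_AB hd, mul_BA]
  ext i j
  simp only [D, Matrix.diagonal_apply, Matrix.sub_apply]
  split_ifs
  · ring
  · ring

lemma rel_DA : D d * A d = A d * D d + (2:ℂ) • A d := by
  ext i j
  simp only [D, Matrix.diagonal_mul, Matrix.mul_diagonal, Matrix.add_apply,
    Matrix.smul_apply, smul_eq_mul, A, Matrix.of_apply]
  split_ifs with h
  · have : ((j:ℕ):ℂ) = (i:ℕ) + 1 := by rw [h]; push_cast; ring
    rw [this]; ring
  · ring

lemma rel_DB : D d * B d = B d * D d - (2:ℂ) • B d := by
  ext i j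
  simp only [D, Matrix.diagonal_mul, Matrix.mul_diagonal, Matrix.sub_apply,
    Matrix.smul_apply, smul_eq_mul, B, Matrix.of_apply]
  split_ifs with h
  · have : ((i:ℕ):ℂ) = (j:ℕ) + 1 := by rw [h]; push_cast; ring
    rw [this]; ring
  · ring

lemma rel_DD (hd : 1 ≤ d) :
    D d * D d = ((d:ℂ)^2 - 1) • (1 : Matrix (Fin d) (Fin d) ℂ)
      - (4:ℂ) • (A d * B d) + (2:ℂ) • D d := by
  rw [mul_AB hd]
  ext i j
  simp only [D, Matrix.diagonal_mul_diagonal, Matrix.add_apply, Matrix.sub_apply,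
    Matrix.smul_apply, Matrix.diagonal_apply, Matrix.one_apply, smul_eq_mul]
  split_ifs
  · ring
  · ring

lemma rel_BA' (hd : 1 ≤ d) (x : Matrix (Fin d) (Fin d) ℂ) :
    B d * (A d * x) = A d * (B d * x) - D d * x := by
  rw [← mul_assoc, rel_BA hd, sub_mul, mul_assoc]

lemma rel_DA' (x : Matrix (Fin d) (Fin d) ℂ) :
    D d * (A d * x) = A d * (D d * x) + (2:ℂ) • (A d * x) := by
  rw [← mul_assoc, rel_DA, add_mul, smul_mul_assoc, mul_assoc]

lemma rel_DB' (x : Matrix (Fin d) (Fin d) ℂ) :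
    D d * (B d * x) = B d * (D d * x) - (2:ℂ) • (B d * x) := by
  rw [← mul_assoc, rel_DB, sub_mul, smul_mul_assoc, mul_assoc]

lemma rel_DD' (hd : 1 ≤ d) (x : Matrix (Fin d) (Fin d) ℂ) :
    D d * (D d * x) = ((d:ℂ)^2 - 1) • x - (4:ℂ) • (A d * (B d * x))
      + (2:ℂ) • (D d * x) := by
  rw [← mul_assoc, rel_DD hd, add_mul, sub_mul, smul_mul_assoc, smul_mul_assoc,
    smul_mul_assoc, one_mul, mul_assoc]

/-! ### Traces -/

lemma tr_A : (A d).trace = 0 := trace_shifts shifts_A (by decide)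
lemma tr_B : (B d).trace = 0 := trace_shifts shifts_B (by decide)
lemma tr_AA : (A d * A d).trace = 0 :=
  trace_shifts (shifts_mul shifts_A shifts_A) (by decide)
lemma tr_AD : (A d * D d).trace = 0 :=
  trace_shifts (shifts_mul shifts_A shifts_D) (by decide)
lemma tr_BB : (B d * B d).trace = 0 :=
  trace_shifts (shifts_mul shifts_B shifts_B) (by decide)
lemma tr_BD : (B d * D d).trace = 0 :=
  trace_shifts (shifts_mul shifts_B shifts_D) (by decide)
lemma tr_AAA : (A d * (A d * A d)).trace = 0 :=
  trace_shifts (shifts_mul shifts_A (shifts_mul shifts_A shifts_A)) (by decide)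
lemma tr_AAB : (A d * (A d * B d)).trace = 0 :=
  trace_shifts (shifts_mul shifts_A (shifts_mul shifts_A shifts_B)) (by decide)
lemma tr_AAD : (A d * (A d * D d)).trace = 0 :=
  trace_shifts (shifts_mul shifts_A (shifts_mul shifts_A shifts_D)) (by decide)
lemma tr_ABB : (A d * (B d * B d)).trace = 0 :=
  trace_shifts (shifts_mul shifts_A (shifts_mul shifts_B shifts_B)) (by decide)
lemma tr_BBB : (B d * (B d * B d)).trace = 0 :=
  trace_shifts (shifts_mul shifts_B (shifts_mul shifts_B shifts_B)) (by decide)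
lemma tr_BBD : (B d * (B d * D d)).trace = 0 :=
  trace_shifts (shifts_mul shifts_B (shifts_mul shifts_B shifts_D)) (by decide)

lemma tr_D : (D d).trace = 0 := by
  rw [D, Matrix.trace_diagonal]
  rw [Fin.sum_univ_eq_sum_range (fun i => ((d:ℂ)-1-2*(i:ℕ)))]
  have h : ∑ i ∈ Finset.range d, ((d:ℂ)-1-2*(i:ℕ))
      = ∑ i ∈ Finset.range d, (((d:ℂ)-1) + (-2)*(i:ℂ) + 0*(i:ℂ)^2 + 0*(i:ℂ)^3) :=
    Finset.sum_congr rfl (fun i _ => by push_cast; ring)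
  rw [h, sum_poly]
  ring

lemma tr_AB (hd : 1 ≤ d) : (A d * B d).trace = (d:ℂ)*((d:ℂ)^2-1)/6 := by
  rw [mul_AB hd, Matrix.trace_diagonal]
  rw [Fin.sum_univ_eq_sum_range (fun i => ((i:ℕ)+1) * ((d:ℂ)-1-(i:ℕ)))]
  have h : ∑ i ∈ Finset.range d, (((i:ℕ):ℂ)+1) * ((d:ℂ)-1-(i:ℕ))
      = ∑ i ∈ Finset.range d,
          (((d:ℂ)-1) + ((d:ℂ)-2)*(i:ℂ) + (-1)*(i:ℂ)^2 + 0*(i:ℂ)^3) :=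
    Finset.sum_congr rfl (fun i _ => by push_cast; ring)
  rw [h, sum_poly]
  push_cast
  ring

lemma tr_ABD (hd : 1 ≤ d) :
    (A d * (B d * D d)).trace = (d:ℂ)*((d:ℂ)^2-1)/6 := by
  rw [← mul_assoc, mul_AB hd, D, Matrix.diagonal_mul_diagonal, Matrix.trace_diagonal]
  rw [Fin.sum_univ_eq_sum_range (fun i => ((i:ℕ)+1) * ((d:ℂ)-1-(i:ℕ)) * ((d:ℂ)-1-2*(i:ℕ)))]
  have h : ∑ i ∈ Finset.range d, ((((i:ℕ):ℂ)+1) * ((d:ℂ)-1-(i:ℕ)) * ((d:ℂ)-1-2*(i:ℕ)))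
      = ∑ i ∈ Finset.range d,
          ((((d:ℂ)-1)^2) + (((d:ℂ)-1)*((d:ℂ)-4))*(i:ℂ)
            + (-(3*(d:ℂ)-5))*(i:ℂ)^2 + 2*(i:ℂ)^3) :=
    Finset.sum_congr rfl (fun i _ => by push_cast; ring)
  rw [h, sum_poly]
  push_cast
  ring

lemma tr_one : (1 : Matrix (Fin d) (Fin d) ℂ).trace = (d:ℂ) := by
  rw [Matrix.trace_one]
  simp

end Stmt11Aux

set_option maxHeartbeats 4000000 in
theorem stmt_11 (d : ℕ) (hd : 2 ≤ d) (X Y Z : Matrix (Fin 2) (Fin 2) ℂ)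
    (hX : X.trace = 0) (hY : Y.trace = 0) (hZ : Z.trace = 0) :
    (((d : ℂ) ^ 2 - 1) * Matrix.trace (sl2Rep d X * sl2Rep d Y * sl2Rep d Z)) •
        (1 : Matrix (Fin d) (Fin d) ℂ) =
      (∑ i ∈ Finset.range ((d + 1) / 2), ((d : ℂ) - 1 - 2 * (i : ℂ)) ^ 2) •
        St3 (sl2Rep d X) (sl2Rep d Y) (sl2Rep d Z) := by
  have hd1 : 1 ≤ d := by omega
  open Stmt11Aux in
  rw [decomp d X, decomp d Y, decomp d Z, St3, L1 d]
  simp only [add_mul, mul_add, sub_mul, mul_sub, smul_mul_assoc, mul_smul_comm,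
    smul_add, smul_sub, smul_smul, mul_assoc, mul_one, one_mul,
    Stmt11Aux.rel_BA hd1, Stmt11Aux.rel_DA, Stmt11Aux.rel_DB,
    Stmt11Aux.rel_DD hd1, Stmt11Aux.rel_BA' hd1, Stmt11Aux.rel_DA',
    Stmt11Aux.rel_DB', Stmt11Aux.rel_DD' hd1,
    Matrix.trace_add, Matrix.trace_sub, Matrix.trace_smul, smul_eq_mul,
    Stmt11Aux.tr_A, Stmt11Aux.tr_B, Stmt11Aux.tr_D, Stmt11Aux.tr_AA,
    Stmt11Aux.tr_AD, Stmt11Aux.tr_BB, Stmt11Aux.tr_BD, Stmt11Aux.tr_AAA,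
    Stmt11Aux.tr_AAB, Stmt11Aux.tr_AAD, Stmt11Aux.tr_ABB, Stmt11Aux.tr_BBB,
    Stmt11Aux.tr_BBD, Stmt11Aux.tr_AB hd1, Stmt11Aux.tr_ABD hd1,
    Stmt11Aux.tr_one]
  match_scalars <;> ring
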